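/- arXiv:1105.4769 — 2 statements merged into one kernel-verified Lean document; each statement's English description precedes it below -/
import Mathlib

section
/- In the sugar-chocolate model: let ρ = |x₀⟩⟨x₀| on C² with x₀ = (e₁+e₂)/√2, S = diag(λ₁, λ₂), C = diag(μ₁, μ₂) with |λ₁|²+|λ₂|² = 1, |μ₁|²+|μ₂|² = 1, λ₁λ₂μ₁μ₂ ≠ 0, X the swap matrix [[0,1],[1,0]]. Define ρ_S = S*ρS/tr(|S|²ρ), ρ_S^a = X ρ_S X, ρ_{S→C}^a = C* ρ_S^a C / tr(|C|² ρ_S^a), and the lifting state E*(ρ) = ρ_S ⊗ ρ_{S→C}^a, with P(S=j, C=k) = tr((E_j ⊗ E_k) E*(ρ)) where E_1, E_2 are the standard rank-one projections. Then P(S=1,C=1) + P(S=2,C=1) = |λ₂|²|μ₁|² / (|λ₂|²|μ₁|² + |λ₁|²|μ₂|²). -/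
open Matrix
open scoped ComplexOrder Kronecker

/-- The neutral state vector x₀ = (e₁ + e₂)/√2. -/
noncomputable def x₀ : Fin 2 → ℂ := fun _ => (Real.sqrt 2 : ℂ)⁻¹

/-- The neutral initial tongue state ρ = |x₀⟩⟨x₀|. -/
noncomputable def ρ₀ : Matrix (Fin 2) (Fin 2) ℂ := vecMulVec x₀ (star x₀)

/-- The adaptive channel ρ ↦ A*ρA / tr(|A|²ρ). -/
noncomputable def chan (A ρ : Matrix (Fin 2) (Fin 2) ℂ) : Matrix (Fin 2) (Fin 2) ℂ :=
  ((Aᴴ * A * ρ).trace)⁻¹ • (Aᴴ * ρ * A)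

/-- The exchanging (swap) operator X. -/
def Xop : Matrix (Fin 2) (Fin 2) ℂ := !![0, 1; 1, 0]

/-- Standard rank-one projections E₁, E₂. -/
def E₁ : Matrix (Fin 2) (Fin 2) ℂ := !![1, 0; 0, 0]
def E₂ : Matrix (Fin 2) (Fin 2) ℂ := !![0, 0; 0, 1]

lemma rho0_apply (i j : Fin 2) : ρ₀ i j = 1/2 := by
  have h : ((Real.sqrt 2 : ℝ) : ℂ) * ((Real.sqrt 2 : ℝ) : ℂ) = 2 := by
    rw [← Complex.ofReal_mul, Real.mul_self_sqrt (by norm_num)]; norm_num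
  simp only [ρ₀, x₀, vecMulVec_apply, Pi.star_apply, Complex.star_def, map_inv₀,
    Complex.conj_ofReal, ← mul_inv, h]
  norm_num


/-- In the sugar–chocolate model with S = diag(λ₁,λ₂), C = diag(μ₁,μ₂),
ρ_S = S*ρS/tr(|S|²ρ), ρ_S^a = Xρ_SX, ρ_{S→C}^a = C*ρ_S^aC/tr(|C|²ρ_S^a) and lifting
E*(ρ) = ρ_S ⊗ ρ_{S→C}^a, P(S=j,C=k) = tr((E_j⊗E_k)E*(ρ)), one has
P(S=1,C=1) + P(S=2,C=1) = |λ₂|²|μ₁|² / (|λ₂|²|μ₁|² + |λ₁|²|μ₂|²). -/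
theorem stmt_11 (l₁ l₂ m₁ m₂ : ℂ)
    (hl : Complex.normSq l₁ + Complex.normSq l₂ = 1)
    (hm : Complex.normSq m₁ + Complex.normSq m₂ = 1)
    (hne : l₁ * l₂ * m₁ * m₂ ≠ 0) :
    ((E₁ ⊗ₖ E₁) * (chan !![l₁, 0; 0, l₂] ρ₀ ⊗ₖ
        chan !![m₁, 0; 0, m₂] (Xop * chan !![l₁, 0; 0, l₂] ρ₀ * Xop))).trace +
    ((E₂ ⊗ₖ E₁) * (chan !![l₁, 0; 0, l₂] ρ₀ ⊗ₖ
        chan !![m₁, 0; 0, m₂] (Xop * chan !![l₁, 0; 0, l₂] ρ₀ * Xop))).trace =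
    ((Complex.normSq l₂ * Complex.normSq m₁ : ℝ) : ℂ) /
      ((Complex.normSq l₂ * Complex.normSq m₁ + Complex.normSq l₁ * Complex.normSq m₂ : ℝ) : ℂ) := by
  have hlC : ((starRingEnd ℂ) l₁ * l₁ + (starRingEnd ℂ) l₂ * l₂) = 1 := by
    rw [← Complex.normSq_eq_conj_mul_self, ← Complex.normSq_eq_conj_mul_self]
    exact_mod_cast congrArg (Complex.ofReal) hl
  -- ρS
  have hT : ((!![l₁, 0; 0, l₂]ᴴ * !![l₁, 0; 0, l₂] * ρ₀).trace) = 1/2 := by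
    simp only [Matrix.trace, Matrix.diag, Matrix.mul_apply, Fin.sum_univ_two,
      conjTranspose_apply, rho0_apply]
    simp [Complex.star_def]
    linear_combination (1/2 : ℂ) * hlC
  have hρS : chan !![l₁, 0; 0, l₂] ρ₀ =
      !![(starRingEnd ℂ) l₁ * l₁, (starRingEnd ℂ) l₁ * l₂;
         (starRingEnd ℂ) l₂ * l₁, (starRingEnd ℂ) l₂ * l₂] := by
    rw [chan, hT]
    ext i j
    fin_cases i <;> fin_cases j <;>
      simp [Matrix.mul_apply, Fin.sum_univ_two, rho0_apply, Complex.star_def] <;> ring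
  -- ρS^a
  have hρSa : Xop * chan !![l₁, 0; 0, l₂] ρ₀ * Xop =
      !![(starRingEnd ℂ) l₂ * l₂, (starRingEnd ℂ) l₂ * l₁;
         (starRingEnd ℂ) l₁ * l₂, (starRingEnd ℂ) l₁ * l₁] := by
    rw [hρS, Xop]
    ext i j
    fin_cases i <;> fin_cases j <;> simp [Matrix.mul_apply, Fin.sum_univ_two]
  rw [hρSa, hρS]
  -- denominator
  set a := (starRingEnd ℂ) l₁ * l₁ with ha
  set b := (starRingEnd ℂ) l₂ * l₂ with hb
  set c := (starRingEnd ℂ) m₁ * m₁ with hc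
  set d := (starRingEnd ℂ) m₂ * m₂ with hd
  have hD : ((!![m₁, 0; 0, m₂]ᴴ * !![m₁, 0; 0, m₂] *
      !![b, (starRingEnd ℂ) l₂ * l₁; (starRingEnd ℂ) l₁ * l₂, a]).trace) = c * b + d * a := by
    simp only [Matrix.trace, Matrix.diag, Matrix.mul_apply, Fin.sum_univ_two,
      conjTranspose_apply]
    simp [Complex.star_def, ha, hb, hc, hd]
  have hDne : c * b + d * a ≠ 0 := by
    have : c * b + d * a = ((Complex.normSq m₁ * Complex.normSq l₂ +
        Complex.normSq m₂ * Complex.normSq l₁ : ℝ) : ℂ) := by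
      push_cast
      rw [Complex.normSq_eq_conj_mul_self, Complex.normSq_eq_conj_mul_self,
        Complex.normSq_eq_conj_mul_self, Complex.normSq_eq_conj_mul_self]
    rw [this]
    rw [Ne, Complex.ofReal_eq_zero]
    have h1 : 0 < Complex.normSq m₁ * Complex.normSq l₂ := by
      apply mul_pos <;> rw [Complex.normSq_pos] <;>
        intro h <;> apply hne <;> simp [h]
    have h2 : 0 ≤ Complex.normSq m₂ * Complex.normSq l₁ :=
      mul_nonneg (Complex.normSq_nonneg _) (Complex.normSq_nonneg _)
    positivity
  rw [chan, hD]
  -- LHS traces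
  simp only [Matrix.trace, Matrix.diag, Matrix.mul_apply, Matrix.kroneckerMap_apply,
    Fintype.sum_prod_type, Fin.sum_univ_two, E₁, E₂, Matrix.smul_apply, smul_eq_mul,
    conjTranspose_apply, Matrix.of_apply, Matrix.cons_val', Matrix.cons_val_zero,
    Matrix.cons_val_one, Matrix.head_cons, Matrix.head_fin_const, Matrix.empty_val',
    Matrix.cons_val_fin_one, star_zero, Complex.star_def, map_zero]
  -- now prove equality
  have hrhs : ((Complex.normSq l₂ * Complex.normSq m₁ : ℝ) : ℂ) = b * c := by
    push_cast
    rw [Complex.normSq_eq_conj_mul_self, Complex.normSq_eq_conj_mul_self]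
  have hrhs2 : ((Complex.normSq l₂ * Complex.normSq m₁ +
      Complex.normSq l₁ * Complex.normSq m₂ : ℝ) : ℂ) = b * c + a * d := by
    push_cast
    rw [Complex.normSq_eq_conj_mul_self, Complex.normSq_eq_conj_mul_self,
      Complex.normSq_eq_conj_mul_self, Complex.normSq_eq_conj_mul_self]
  rw [hrhs, hrhs2]
  rw [eq_div_iff (by rw [show b*c + a*d = c*b + d*a by ring]; exact hDne)]
  field_simp
  simp only [ha, hb, hc, hd] at hlC ⊢
  have hDinv : ((starRingEnd ℂ) m₁ * m₁ * ((starRingEnd ℂ) l₂ * l₂) +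
      (starRingEnd ℂ) m₂ * m₂ * ((starRingEnd ℂ) l₁ * l₁)) *
      ((starRingEnd ℂ) m₁ * m₁ * ((starRingEnd ℂ) l₂ * l₂) +
      (starRingEnd ℂ) m₂ * m₂ * ((starRingEnd ℂ) l₁ * l₁))⁻¹ = 1 := mul_inv_cancel₀ hDne
  linear_combination ((starRingEnd ℂ) l₂ * l₂ * ((starRingEnd ℂ) m₁ * m₁)) * hlC +
    ((starRingEnd ℂ) l₂ * l₂ * ((starRingEnd ℂ) m₁ * m₁) *
    ((starRingEnd ℂ) l₁ * l₁ + (starRingEnd ℂ) l₂ * l₂)) * hDinv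
end

section
/- In the sugar-chocolate model with |λ₁|² > 1/2 > |λ₂|² > 0 and |μ₁|² > 1/2 > |μ₂|² > 0, the total probability law is violated: |μ₁|² ≠ |λ₂|²|μ₁|²/(|λ₂|²|μ₁|² + |λ₁|²|μ₂|²) whenever |λ₁|² ≠ |λ₂|². In particular P(C=1) = tr(E₁ Λ_C*(ρ)) = |μ₁|² differs from P(S=1,C=1)+P(S=2,C=1). -/
open Matrix
open scoped ComplexOrder Kronecker

lemma rho_eq : ρ₀ = !![2⁻¹,2⁻¹;2⁻¹,2⁻¹] := by
  have h2 : ((Real.sqrt 2 : ℂ))⁻¹ * ((Real.sqrt 2 : ℂ))⁻¹ = 2⁻¹ := by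
    rw [← mul_inv]; norm_cast
    rw [Real.mul_self_sqrt (by norm_num)]; push_cast; ring
  ext i j
  fin_cases i <;> fin_cases j <;>
    simp [ρ₀, x₀, vecMulVec_apply, h2, Complex.conj_ofReal]

lemma normSqC (c : ℂ) : (starRingEnd ℂ) c * c = ((Complex.normSq c : ℝ) : ℂ) := by
  rw [Complex.normSq_eq_conj_mul_self]

lemma chan_rho (c₁ c₂ : ℂ) (h : Complex.normSq c₁ + Complex.normSq c₂ = 1) :
    chan !![c₁, 0; 0, c₂] ρ₀ =
      !![star c₁ * c₁, star c₁ * c₂; star c₂ * c₁, star c₂ * c₂] := by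
  have h' : ((Complex.normSq c₁ : ℝ) : ℂ) + ((Complex.normSq c₂ : ℝ) : ℂ) = 1 := by
    rw [← Complex.ofReal_add, h]; norm_num
  have htr : ((!![c₁, 0; 0, c₂]ᴴ * !![c₁, 0; 0, c₂] * ρ₀).trace) = 2⁻¹ := by
    rw [rho_eq]
    simp [trace, Matrix.mul_apply, Fin.sum_univ_two, conjTranspose_apply]
    rw [normSqC, normSqC]
    linear_combination 2⁻¹ * h'
  unfold chan
  rw [htr, rho_eq]
  ext i j
  fin_cases i <;> fin_cases j <;>
    · simp [Matrix.mul_apply, Fin.sum_univ_two, conjTranspose_apply]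
      ring

lemma trace_E1 (A : Matrix (Fin 2) (Fin 2) ℂ) : (E₁ * A).trace = A 0 0 := by
  simp [E₁, trace, Matrix.mul_apply, Matrix.vecMul, dotProduct, Fin.sum_univ_two]
lemma trace_E2 (A : Matrix (Fin 2) (Fin 2) ℂ) : (E₂ * A).trace = A 1 1 := by
  simp [E₂, trace, Matrix.mul_apply, Matrix.vecMul, dotProduct, Fin.sum_univ_two]

lemma tau00 (l₁ l₂ m₁ m₂ : ℂ)
    (hl : Complex.normSq l₁ + Complex.normSq l₂ = 1) :
    (chan !![m₁, 0; 0, m₂] (Xop * chan !![l₁, 0; 0, l₂] ρ₀ * Xop)) 0 0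
      = (((Complex.normSq m₁ * Complex.normSq l₂
          + Complex.normSq m₂ * Complex.normSq l₁ : ℝ)) : ℂ)⁻¹
        * ((Complex.normSq m₁ * Complex.normSq l₂ : ℝ) : ℂ) := by
  set a := Complex.normSq l₁; set b := Complex.normSq l₂
  set p := Complex.normSq m₁; set q := Complex.normSq m₂
  have hL := chan_rho l₁ l₂ hl
  have hσ : Xop * chan !![l₁, 0; 0, l₂] ρ₀ * Xop =
      !![star l₂ * l₂, star l₂ * l₁; star l₁ * l₂, star l₁ * l₁] := by
    rw [hL]; ext i j
    fin_cases i <;> fin_cases j <;>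
      simp [Xop, Matrix.mul_apply, Matrix.vecMul, dotProduct, Fin.sum_univ_two]
  rw [hσ]
  unfold chan
  have htr : (!![m₁, 0; 0, m₂]ᴴ * !![m₁, 0; 0, m₂] *
      !![star l₂ * l₂, star l₂ * l₁; star l₁ * l₂, star l₁ * l₁]).trace
      = (((p*b + q*a : ℝ)) : ℂ) := by
    simp only [trace, Matrix.diag, Fin.sum_univ_two, Matrix.mul_apply,
      conjTranspose_apply, Fin.isValue]
    simp [Matrix.vecMul, dotProduct, Fin.sum_univ_two]
    try rw [show (starRingEnd ℂ) m₁ * m₁ * ((starRingEnd ℂ) l₂ * l₂) +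
          (starRingEnd ℂ) m₂ * m₂ * ((starRingEnd ℂ) l₁ * l₁)
        = ((starRingEnd ℂ) m₁ * m₁) * ((starRingEnd ℂ) l₂ * l₂) +
          ((starRingEnd ℂ) m₂ * m₂) * ((starRingEnd ℂ) l₁ * l₁) by ring]
    try rw [normSqC, normSqC, normSqC, normSqC]
    try push_cast
    try ring
  rw [htr, Matrix.smul_apply]
  congr 1
  simp [Matrix.mul_apply, Matrix.vecMul, dotProduct, Fin.sum_univ_two, conjTranspose_apply]
  try rw [show (starRingEnd ℂ) m₁ * ((starRingEnd ℂ) l₂ * l₂) * m₁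
      = ((starRingEnd ℂ) m₁ * m₁) * ((starRingEnd ℂ) l₂ * l₂) by ring]
  try rw [normSqC, normSqC]
  try push_cast
  try ring

/-- In the sugar–chocolate model with |λ₁|² > 1/2 > |λ₂|² > 0 and
|μ₁|² > 1/2 > |μ₂|² > 0, the total probability law is violated:
P(C=1) = tr(E₁Λ_C*(ρ)) = |μ₁|² differs from P(S=1,C=1) + P(S=2,C=1)
= |λ₂|²|μ₁|²/(|λ₂|²|μ₁|² + |λ₁|²|μ₂|²) whenever |λ₁|² ≠ |λ₂|². -/
theorem stmt_12 (l₁ l₂ m₁ m₂ : ℂ)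
    (hl : Complex.normSq l₁ + Complex.normSq l₂ = 1)
    (hm : Complex.normSq m₁ + Complex.normSq m₂ = 1)
    (hl₁ : 1 / 2 < Complex.normSq l₁) (hl₂ : Complex.normSq l₂ < 1 / 2)
    (hl₂pos : 0 < Complex.normSq l₂)
    (hm₁ : 1 / 2 < Complex.normSq m₁) (hm₂ : Complex.normSq m₂ < 1 / 2)
    (hm₂pos : 0 < Complex.normSq m₂)
    (hdiff : Complex.normSq l₁ ≠ Complex.normSq l₂) :
    (E₁ * chan !![m₁, 0; 0, m₂] ρ₀).trace = ((Complex.normSq m₁ : ℝ) : ℂ) ∧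
    (Complex.normSq m₁ : ℝ) ≠
      Complex.normSq l₂ * Complex.normSq m₁ /
        (Complex.normSq l₂ * Complex.normSq m₁ + Complex.normSq l₁ * Complex.normSq m₂) ∧
    (E₁ * chan !![m₁, 0; 0, m₂] ρ₀).trace ≠
      ((E₁ ⊗ₖ E₁) * (chan !![l₁, 0; 0, l₂] ρ₀ ⊗ₖ
          chan !![m₁, 0; 0, m₂] (Xop * chan !![l₁, 0; 0, l₂] ρ₀ * Xop))).trace +
      ((E₂ ⊗ₖ E₁) * (chan !![l₁, 0; 0, l₂] ρ₀ ⊗ₖ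
          chan !![m₁, 0; 0, m₂] (Xop * chan !![l₁, 0; 0, l₂] ρ₀ * Xop))).trace := by
  set a := Complex.normSq l₁ with ha
  set b := Complex.normSq l₂ with hb
  set p := Complex.normSq m₁ with hp
  set q := Complex.normSq m₂ with hq
  have hppos : (0:ℝ) < p := by linarith
  have hapos : (0:ℝ) < a := by linarith
  have hdpos : (0:ℝ) < b * p + a * q := by nlinarith
  -- first conjunct
  have h1 : (E₁ * chan !![m₁, 0; 0, m₂] ρ₀).trace = ((p : ℝ) : ℂ) := by
    rw [chan_rho m₁ m₂ hm, trace_E1]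
    simpa using normSqC m₁
  -- second conjunct
  have h2 : (p : ℝ) ≠ b * p / (b * p + a * q) := by
    intro h
    rw [eq_div_iff hdpos.ne'] at h
    have key : a * (p * q) = b * (p * q) := by linear_combination h - b*p*hm
    exact hdiff (mul_right_cancel₀ (by positivity) key)
  refine ⟨h1, h2, ?_⟩
  -- third conjunct
  have hL := chan_rho l₁ l₂ hl
  have hτ := tau00 l₁ l₂ m₁ m₂ hl
  rw [h1, ← Matrix.mul_kronecker_mul, ← Matrix.mul_kronecker_mul,
    Matrix.trace_kronecker, Matrix.trace_kronecker, trace_E1, trace_E1, trace_E2,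
    hτ, hL]
  have hLa : (!![star l₁ * l₁, star l₁ * l₂; star l₂ * l₁, star l₂ * l₂] :
      Matrix (Fin 2) (Fin 2) ℂ) 0 0 = ((a : ℝ) : ℂ) := by simpa using normSqC l₁
  have hLb : (!![star l₁ * l₁, star l₁ * l₂; star l₂ * l₁, star l₂ * l₂] :
      Matrix (Fin 2) (Fin 2) ℂ) 1 1 = ((b : ℝ) : ℂ) := by simpa using normSqC l₂
  rw [hLa, hLb]
  have hab : ((a : ℝ) : ℂ) + ((b : ℝ) : ℂ) = 1 := by
    rw [← Complex.ofReal_add, hl]; norm_num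
  rw [show ((a:ℝ):ℂ) * ((((p * b + q * a : ℝ)):ℂ)⁻¹ * ((p * b : ℝ):ℂ))
      + ((b:ℝ):ℂ) * ((((p * b + q * a : ℝ)):ℂ)⁻¹ * ((p * b : ℝ):ℂ))
      = (((a:ℝ):ℂ) + ((b:ℝ):ℂ)) * ((((p * b + q * a : ℝ)):ℂ)⁻¹ * ((p * b : ℝ):ℂ)) by ring,
    hab, one_mul]
  intro h
  apply h2
  have : ((p:ℝ):ℂ) = (((b * p / (b * p + a * q) : ℝ)) : ℂ) := by
    rw [h]
    rw [Complex.ofReal_div]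
    rw [div_eq_inv_mul]
    push_cast
    ring_nf
  exact_mod_cast this
end
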